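/- Let ν ≥ 1 and L ≥ 2 be natural numbers. Then, as the natural number m tends to infinity, the real sequence m · C((L−1)·m, ν−1) / C(L·m, ν) converges to (ν/L)·(1 − 1/L)^(ν−1), where C(n, k) denotes the binomial coefficient. -/

import Mathlib

open Filter Finset

lemma cast_choose_real (n k : ℕ) :
    (Nat.choose n k : ℝ) = (∏ i ∈ range k, ((n : ℝ) - i)) / (Nat.factorial k : ℝ) := by
  have h := Nat.descFactorial_eq_factorial_mul_choose n k
  rcases le_or_gt k n with hkn | hkn
  · have hcast : (Nat.descFactorial n k : ℝ) = ∏ i ∈ range k, ((n : ℝ) - i) := by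
      rw [Nat.descFactorial_eq_prod_range, Nat.cast_prod]
      refine Finset.prod_congr rfl fun i hi => ?_
      have : i ≤ n := le_trans (le_of_lt (mem_range.mp hi)) hkn
      push_cast [this]
      ring
    have := congrArg (fun x : ℕ => (x : ℝ)) h
    simp only [Nat.cast_mul] at this
    rw [hcast] at this
    field_simp [Nat.factorial_ne_zero] at this ⊢
    linarith [this]
  · -- k > n : choose = 0 and product has a zero factor
    rw [Nat.choose_eq_zero_of_lt hkn]
    have : (∏ i ∈ range k, ((n : ℝ) - i)) = 0 := by
      apply Finset.prod_eq_zero (mem_range.mpr hkn)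
      simp
    rw [this]
    simp

/-- Asymptotic frame efficiency: with `N = L·m` users split evenly into `L ≥ 2`
slots (`m` users per slot) and `ν ≥ 1` active users, the per-slot success
probability `m·C((L−1)m, ν−1)/C(Lm, ν)` converges, as `m → ∞`, to
`(ν/L)·(1 − 1/L)^(ν−1)`. -/
theorem pima_frame_efficiency_limit (ν L : ℕ) (hν : 1 ≤ ν) (hL : 2 ≤ L) :
    Filter.Tendsto
      (fun m : ℕ =>
        (m : ℝ) * (Nat.choose ((L - 1) * m) (ν - 1) : ℝ) / (Nat.choose (L * m) ν : ℝ))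
      Filter.atTop
      (nhds ((ν : ℝ) / L * (1 - 1 / (L : ℝ)) ^ (ν - 1))) := by
  have hL1 : (1 : ℝ) ≤ (L : ℝ) - 1 := by
    have : (2 : ℝ) ≤ (L : ℝ) := by exact_mod_cast hL
    linarith
  have hLpos : (0 : ℝ) < L := by positivity
  -- auxiliary functions
  set g : ℕ → ℝ := fun m => ∏ i ∈ range (ν - 1), (((L : ℝ) - 1) - i / m) with hg
  set h : ℕ → ℝ := fun m => ∏ i ∈ range ν, ((L : ℝ) - i / m) with hh
  have hgt : Tendsto g atTop (nhds (((L : ℝ) - 1) ^ (ν - 1))) := by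
    have : Tendsto g atTop (nhds (∏ _i ∈ range (ν - 1), ((L : ℝ) - 1))) := by
      apply tendsto_finset_prod
      intro i _
      simpa using tendsto_const_nhds.sub (tendsto_const_div_atTop_nhds_zero_nat (i : ℝ))
    simpa using this
  have hht : Tendsto h atTop (nhds ((L : ℝ) ^ ν)) := by
    have : Tendsto h atTop (nhds (∏ _i ∈ range ν, (L : ℝ))) := by
      apply tendsto_finset_prod
      intro i _
      simpa using tendsto_const_nhds.sub (tendsto_const_div_atTop_nhds_zero_nat (i : ℝ))
    simpa using this
  have hLν : (L : ℝ) ^ ν ≠ 0 := by positivity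
  have key : Tendsto (fun m => (ν : ℝ) * g m / h m) atTop
      (nhds ((ν : ℝ) * ((L : ℝ) - 1) ^ (ν - 1) / (L : ℝ) ^ ν)) :=
    (hgt.const_mul _).div hht hLν
  have hlim_eq : (ν : ℝ) * ((L : ℝ) - 1) ^ (ν - 1) / (L : ℝ) ^ ν
      = (ν : ℝ) / L * (1 - 1 / (L : ℝ)) ^ (ν - 1) := by
    have hLne : (L : ℝ) ≠ 0 := ne_of_gt hLpos
    have h1 : (1 : ℝ) - 1 / L = ((L : ℝ) - 1) / L := by field_simp
    rw [h1, div_pow]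
    have hν' : ν - 1 + 1 = ν := Nat.succ_pred_eq_of_pos hν
    rw [← hν', pow_succ]
    field_simp
    ring_nf
    congr 1
    omega
  rw [← hlim_eq]
  apply key.congr'
  filter_upwards [eventually_ge_atTop ν, eventually_ge_atTop 1] with m hmν hm1
  have hmpos : (0 : ℝ) < m := by exact_mod_cast hm1
  -- rewrite the choose ratio
  have hfact : ∀ i ∈ range ν, ((L : ℝ) * m - i) = m * ((L : ℝ) - i / m) := by
    intro i _; field_simp
  have hfact2 : ∀ i ∈ range (ν - 1), (((L : ℝ) - 1) * m - i) = m * (((L : ℝ) - 1) - i / m) := by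
    intro i _; field_simp
  have hden_pos : ∀ i ∈ range ν, (0 : ℝ) < (L : ℝ) - i / m := by
    intro i hi
    have hi' : (i : ℝ) < m := by
      exact_mod_cast lt_of_lt_of_le (mem_range.mp hi) hmν
    have : (i : ℝ) / m < 1 := (div_lt_one hmpos).mpr hi'
    nlinarith [hL1]
  have hhpos : 0 < h m := Finset.prod_pos hden_pos
  rw [cast_choose_real, cast_choose_real]
  have hcast1 : ((((L : ℕ) - 1) * m : ℕ) : ℝ) = ((L : ℝ) - 1) * m := by
    have : 1 ≤ L := le_trans one_le_two hL
    push_cast [this]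
    ring
  have hcast2 : (((L : ℕ) * m : ℕ) : ℝ) = (L : ℝ) * m := by push_cast; ring
  rw [hcast1, hcast2]
  have hnum : (∏ i ∈ range (ν - 1), (((L : ℝ) - 1) * m - i))
      = m ^ (ν - 1) * g m := by
    rw [Finset.prod_congr rfl hfact2, Finset.prod_mul_distrib]
    simp [hg]
  have hden : (∏ i ∈ range ν, ((L : ℝ) * m - i)) = m ^ ν * h m := by
    rw [Finset.prod_congr rfl hfact, Finset.prod_mul_distrib]
    simp [hh]
  rw [hnum, hden]
  have hν' : ν - 1 + 1 = ν := Nat.succ_pred_eq_of_pos hν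
  have hmpow : (m : ℝ) ^ ν = m ^ (ν - 1) * m := by rw [← pow_succ, hν']
  have hfactν : (Nat.factorial ν : ℝ) = (ν : ℝ) * (Nat.factorial (ν - 1) : ℝ) := by
    exact_mod_cast (Nat.mul_factorial_pred (by omega)).symm
  rw [hmpow, hfactν]
  have hf1 : (Nat.factorial (ν - 1) : ℝ) ≠ 0 := by positivity
  have hνpos : (0 : ℝ) < ν := by exact_mod_cast hν
  field_simp
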